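/- The Magnus map from the free group F on a set X into the multiplicative group of units of the ring of formal power series in non-commuting variables {X_x : x ∈ X} over ℤ, defined by x ↦ 1 + X_x, is an injective group homomorphism. -/

import Mathlib

open Classical in
/-- The ring of formal power series over `ℤ` in non-commuting variables indexed by `X`:
coefficient functions on the free monoid of monomials, with convolution product. -/
def NCSeries (X : Type*) : Type _ := FreeMonoid X → ℤ

namespace NCSeries

variable {X : Type*}

instance : AddCommGroup (NCSeries X) := inferInstanceAs (AddCommGroup (FreeMonoid X → ℤ))

open Classical in
noncomputable instance : One (NCSeries X) := ⟨fun w => if w = 1 then 1 else 0⟩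

instance : Mul (NCSeries X) :=
  ⟨fun f g w => ∑ i ∈ Finset.range ((FreeMonoid.toList w).length + 1),
    f (FreeMonoid.ofList ((FreeMonoid.toList w).take i)) *
      g (FreeMonoid.ofList ((FreeMonoid.toList w).drop i))⟩

theorem mul_apply (f g : NCSeries X) (w : FreeMonoid X) :
    (f * g) w = ∑ i ∈ Finset.range ((FreeMonoid.toList w).length + 1),
      f (FreeMonoid.ofList ((FreeMonoid.toList w).take i)) *
        g (FreeMonoid.ofList ((FreeMonoid.toList w).drop i)) := rfl

open Classical in
theorem one_apply (w : FreeMonoid X) : (1 : NCSeries X) w = if w = 1 then 1 else 0 := rfl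

theorem add_apply (f g : NCSeries X) (w : FreeMonoid X) : (f + g) w = f w + g w := rfl

theorem zero_apply (w : FreeMonoid X) : (0 : NCSeries X) w = 0 := rfl

theorem ofList_eq_one_iff (l : List X) : FreeMonoid.ofList l = 1 ↔ l = [] := by
  constructor
  · intro h; simpa using congrArg FreeMonoid.toList h
  · rintro rfl; rfl

noncomputable instance : Ring (NCSeries X) where
  __ := (inferInstance : AddCommGroup (NCSeries X))
  one_mul f := by
    funext w
    rw [mul_apply, Finset.sum_eq_single 0]
    · simp [one_apply, ofList_eq_one_iff]
    · intro b hb hb0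
      have : ¬ ((FreeMonoid.toList w).take b = []) := by
        rw [List.take_eq_nil_iff]
        rw [Finset.mem_range] at hb
        rintro (rfl | hnil)
        · exact hb0 rfl
        · simp [hnil] at hb; omega
      rw [one_apply, if_neg, zero_mul]
      rw [ofList_eq_one_iff]; exact this
    · intro h0; exact absurd (Finset.mem_range.2 (Nat.succ_pos _)) h0
  mul_one f := by
    funext w
    rw [mul_apply, Finset.sum_eq_single ((FreeMonoid.toList w).length)]
    · simp [one_apply, ofList_eq_one_iff]
    · intro b hb hb'
      rw [Finset.mem_range] at hb
      rw [one_apply, if_neg, mul_zero]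
      rw [ofList_eq_one_iff, List.drop_eq_nil_iff]
      omega
    · intro h0; exact absurd (Finset.mem_range.2 (Nat.lt_succ_self _)) h0
  mul_assoc f g h := by
    funext w
    set l := FreeMonoid.toList w with hl
    have key : ∀ j ∈ Finset.range (l.length + 1),
        (f * g) (FreeMonoid.ofList (l.take j)) * h (FreeMonoid.ofList (l.drop j)) =
        ∑ i ∈ Finset.range (j + 1),
          f (FreeMonoid.ofList (l.take i)) *
            g (FreeMonoid.ofList ((l.drop i).take (j - i))) *
            h (FreeMonoid.ofList (l.drop j)) := by
      intro j hj
      rw [Finset.mem_range] at hj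
      rw [mul_apply, Finset.sum_mul]
      simp only [FreeMonoid.toList_ofList]
      rw [List.length_take, min_eq_left (by omega)]
      refine Finset.sum_congr rfl fun i hi => ?_
      rw [Finset.mem_range] at hi
      rw [List.take_take, min_eq_left (by omega), List.drop_take]
    have key2 : ∀ i ∈ Finset.range (l.length + 1),
        f (FreeMonoid.ofList (l.take i)) * (g * h) (FreeMonoid.ofList (l.drop i)) =
        ∑ k ∈ Finset.range ((l.length - i) + 1),
          f (FreeMonoid.ofList (l.take i)) *
            (g (FreeMonoid.ofList ((l.drop i).take k)) *
              h (FreeMonoid.ofList (l.drop (i + k)))) := by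
      intro i hi
      rw [Finset.mem_range] at hi
      rw [mul_apply, Finset.mul_sum]
      simp only [FreeMonoid.toList_ofList]
      rw [List.length_drop]
      refine Finset.sum_congr rfl fun k hk => ?_
      rw [List.drop_drop]
    show (f * g * h) w = (f * (g * h)) w
    rw [mul_apply, Finset.sum_congr rfl key, Finset.sum_sigma']
    rw [mul_apply, Finset.sum_congr rfl key2, Finset.sum_sigma']
    refine Finset.sum_nbij' (fun p => ⟨p.2, p.1 - p.2⟩) (fun p => ⟨p.1 + p.2, p.1⟩)
      ?_ ?_ ?_ ?_ ?_
    · rintro ⟨j, i⟩ hp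
      simp only [Finset.mem_sigma, Finset.mem_range] at hp ⊢
      omega
    · rintro ⟨i, k⟩ hp
      simp only [Finset.mem_sigma, Finset.mem_range] at hp ⊢
      omega
    · rintro ⟨j, i⟩ hp
      simp only [Finset.mem_sigma, Finset.mem_range] at hp
      simp only [Sigma.mk.inj_iff, heq_eq_eq]
      exact ⟨by omega, trivial⟩
    · rintro ⟨i, k⟩ hp
      simp only [Finset.mem_sigma, Finset.mem_range] at hp
      simp only [Sigma.mk.inj_iff, heq_eq_eq]
      refine ⟨by trivial, by omega⟩
    · rintro ⟨j, i⟩ hp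
      simp only [Finset.mem_sigma, Finset.mem_range] at hp
      have hij : i + (j - i) = j := by omega
      rw [hij, mul_assoc]
  left_distrib f g h := by
    funext w
    simp only [mul_apply, add_apply, mul_add, Finset.sum_add_distrib]
  right_distrib f g h := by
    funext w
    simp only [mul_apply, add_apply, add_mul, Finset.sum_add_distrib]
  zero_mul f := by funext w; simp [mul_apply, zero_apply]
  mul_zero f := by funext w; simp [mul_apply, zero_apply]

open Classical in
/-- The variable `X_x` as a power series. -/
noncomputable def Xvar (x : X) : NCSeries X :=
  fun w => if w = FreeMonoid.of x then 1 else 0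

open scoped Classical

theorem ofList_nil : (FreeMonoid.ofList ([] : List X)) = 1 := rfl

theorem eq_of_forall_ofList {f g : NCSeries X}
    (h : ∀ l : List X, f (FreeMonoid.ofList l) = g (FreeMonoid.ofList l)) : f = g :=
  funext fun w => by rw [← FreeMonoid.ofList_toList w]; exact h _

theorem one_ofList (l : List X) :
    (1 : NCSeries X) (FreeMonoid.ofList l) = if l = [] then 1 else 0 := by
  rw [one_apply]
  by_cases h : l = []
  · simp [h, ofList_nil]
  · rw [if_neg h, if_neg]
    intro hc
    exact h ((ofList_eq_one_iff l).mp hc)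

theorem Xvar_ofList (x : X) (l : List X) :
    Xvar x (FreeMonoid.ofList l) = if l = [x] then 1 else 0 := by
  unfold Xvar
  by_cases h : l = [x]
  · subst h
    rw [if_pos rfl, if_pos]
    rfl
  · rw [if_neg h, if_neg]
    intro hc
    exact h (by simpa using congrArg FreeMonoid.toList hc)

theorem mul_ofList (f g : NCSeries X) (l : List X) :
    (f * g) (FreeMonoid.ofList l) = ∑ i ∈ Finset.range (l.length + 1),
      f (FreeMonoid.ofList (l.take i)) * g (FreeMonoid.ofList (l.drop i)) := by
  rw [mul_apply]
  simp

open Classical in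
/-- The inverse of `1 + X_x` : alternating sum of powers of `X_x`. -/
noncomputable def geom (x : X) : NCSeries X :=
  fun w => if ∀ a ∈ FreeMonoid.toList w, a = x then
    (-1 : ℤ) ^ (FreeMonoid.toList w).length else 0

open Classical in
theorem geom_ofList (x : X) (l : List X) :
    geom x (FreeMonoid.ofList l) = if ∀ a ∈ l, a = x then (-1 : ℤ) ^ l.length else 0 := by
  unfold geom; simp; congr

theorem oneXvar_ofList (x : X) (l : List X) :
    (1 + Xvar x) (FreeMonoid.ofList l) =
      (if l = [] then 1 else 0) + (if l = [x] then 1 else 0) := by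
  rw [add_apply, one_ofList, Xvar_ofList]

/-- Extract the first two terms of a sum whose other terms vanish. -/
theorem sum_range_two_extract (n : ℕ) (φ : ℕ → ℤ)
    (h : ∀ i, 2 ≤ i → i < n + 2 → φ i = 0) :
    ∑ i ∈ Finset.range (n + 2), φ i = φ 0 + φ 1 := by
  induction n with
  | zero => simp [Finset.sum_range_succ]
  | succ n ih =>
    rw [Finset.sum_range_succ, ih fun i h2 hlt => h i h2 (by omega),
      h (n + 2) (by omega) (by omega), add_zero]

theorem oneXvar_mul_geom (x : X) : (1 + Xvar x) * geom x = 1 := by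
  refine eq_of_forall_ofList fun l => ?_
  rw [mul_ofList, one_ofList]
  match l with
  | [] =>
    rw [if_pos rfl, show ([] : List X).length + 1 = 1 from rfl, Finset.sum_range_one]
    simp only [List.take_nil, List.drop_nil]
    rw [oneXvar_ofList, geom_ofList]
    norm_num
  | a :: t =>
    rw [if_neg (by simp)]
    have hlen : (a :: t).length + 1 = t.length + 2 := by simp
    rw [hlen, sum_range_two_extract _ _ ?_]
    · simp only [List.take_zero, List.drop_zero, List.take_succ_cons, List.take_zero,
        List.drop_succ_cons, List.drop_zero]
      rw [oneXvar_ofList, oneXvar_ofList, geom_ofList, geom_ofList]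
      by_cases hax : a = x
      · subst hax
        by_cases ht : ∀ b ∈ t, b = a
        · have h1 : ∀ b ∈ a :: t, b = a := by simpa using ht
          rw [if_pos h1, if_pos ht]
          simp [pow_succ]
        · have h1 : ¬∀ b ∈ a :: t, b = a :=
            fun hc => ht fun b hb => hc b (List.mem_cons_of_mem _ hb)
          rw [if_neg h1, if_neg ht]
          simp
      · have h1 : ¬∀ b ∈ a :: t, b = x := fun hc => hax (hc a List.mem_cons_self)
        have h2 : [a] ≠ [x] := fun hc => hax (List.cons_eq_cons.mp hc).1
        rw [if_neg h1, if_neg h2]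
        simp
    · intro i hi hlt
      obtain ⟨j, rfl⟩ : ∃ j, i = j + 2 := ⟨i - 2, by omega⟩
      rw [oneXvar_ofList]
      have h1 : ((a :: t).take (j + 2)) ≠ [] := by simp
      have h2 : ((a :: t).take (j + 2)) ≠ [x] := by
        rw [List.take_succ_cons]
        intro hc
        have h3 := (List.cons_eq_cons.mp hc).2
        have h4 := congrArg List.length h3
        rw [List.length_take] at h4
        simp only [List.length_nil] at h4
        omega
      rw [if_neg h1, if_neg h2]
      simp

/-- Reversal of monomials, an anti-automorphism of the ring. -/
noncomputable def rev (f : NCSeries X) : NCSeries X :=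
  fun w => f (FreeMonoid.ofList (FreeMonoid.toList w).reverse)

theorem rev_mul (f g : NCSeries X) : rev (f * g) = rev g * rev f := by
  refine eq_of_forall_ofList fun l => ?_
  show (f * g) (FreeMonoid.ofList (FreeMonoid.toList (FreeMonoid.ofList l)).reverse) = _
  rw [mul_ofList]
  simp only [FreeMonoid.toList_ofList]
  rw [mul_ofList, List.length_reverse]
  rw [← Finset.sum_range_reflect]
  refine Finset.sum_congr rfl fun i hi => ?_
  rw [Finset.mem_range] at hi
  have e : l.length + 1 - 1 - i = l.length - i := by omega
  rw [e]
  show f _ * g _ = rev g (FreeMonoid.ofList (l.take i)) * rev f (FreeMonoid.ofList (l.drop i))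
  unfold rev
  simp only [FreeMonoid.toList_ofList]
  rw [List.reverse_take, List.reverse_drop, mul_comm]

theorem rev_oneXvar (x : X) : rev (1 + Xvar x) = 1 + Xvar x := by
  refine eq_of_forall_ofList fun l => ?_
  show (1 + Xvar x) (FreeMonoid.ofList (FreeMonoid.toList (FreeMonoid.ofList l)).reverse) = _
  rw [FreeMonoid.toList_ofList, oneXvar_ofList, oneXvar_ofList]
  have e1 : (l.reverse = []) = (l = []) := by simp
  have e2 : (l.reverse = [x]) = (l = [x]) := by simp [List.reverse_eq_iff]
  simp only [e1, e2]

theorem rev_geom (x : X) : rev (geom x) = geom x := by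
  refine eq_of_forall_ofList fun l => ?_
  show geom x (FreeMonoid.ofList (FreeMonoid.toList (FreeMonoid.ofList l)).reverse) = _
  rw [FreeMonoid.toList_ofList, geom_ofList, geom_ofList]
  by_cases hc : ∀ a ∈ l, a = x
  · rw [if_pos hc, if_pos (by simpa using hc), List.length_reverse]
  · rw [if_neg hc, if_neg (by simpa using hc)]

theorem rev_one : rev (1 : NCSeries X) = 1 := by
  refine eq_of_forall_ofList fun l => ?_
  show (1 : NCSeries X) (FreeMonoid.ofList (FreeMonoid.toList (FreeMonoid.ofList l)).reverse) = _
  rw [FreeMonoid.toList_ofList, one_ofList, one_ofList]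
  by_cases hc : l = []
  · rw [if_pos hc, if_pos (by simp [hc])]
  · rw [if_neg hc, if_neg (by simp [hc])]

theorem geom_mul_oneXvar (x : X) : geom x * (1 + Xvar x) = 1 := by
  have := congrArg rev (oneXvar_mul_geom x)
  rwa [rev_mul, rev_one, rev_oneXvar, rev_geom] at this

/-- The image of the generator `x` as a unit of the power series ring. -/
noncomputable def magnusUnit (x : X) : (NCSeries X)ˣ :=
  ⟨1 + Xvar x, geom x, oneXvar_mul_geom x, geom_mul_oneXvar x⟩

/-! ### The destutter operation on monomials -/

open Classical in
/-- Collapse consecutive equal letters to a single letter. -/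
noncomputable def D : List X → List X
  | [] => []
  | [x] => [x]
  | x :: y :: l => if x = y then D (y :: l) else x :: D (y :: l)

@[simp] theorem D_nil : D ([] : List X) = [] := rfl

@[simp] theorem D_singleton (x : X) : D [x] = [x] := rfl

open Classical in
theorem D_cons_cons (x y : X) (l : List X) :
    D (x :: y :: l) = if x = y then D (y :: l) else x :: D (y :: l) := rfl

theorem D_cons_head (x : X) (l : List X) : ∃ t, D (x :: l) = x :: t := by
  induction l generalizing x with
  | nil => exact ⟨[], rfl⟩
  | cons y l ih =>
    rw [D_cons_cons]
    by_cases h : x = y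
    · subst h
      obtain ⟨t, ht⟩ := ih x
      exact ⟨t, by rw [if_pos rfl, ht]⟩
    · exact ⟨D (y :: l), by rw [if_neg h]⟩

theorem D_ne_nil (x : X) (l : List X) : D (x :: l) ≠ [] := by
  obtain ⟨t, ht⟩ := D_cons_head x l
  simp [ht]

theorem length_D_cons_cons (x y : X) (l : List X) :
    (D (x :: y :: l)).length = (if x = y then 0 else 1) + (D (y :: l)).length := by
  rw [D_cons_cons]
  by_cases h : x = y
  · rw [if_pos h, if_pos h, zero_add]
  · rw [if_neg h, if_neg h, List.length_cons]
    omega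

theorem length_D_le_cons (x : X) (l : List X) :
    (D l).length ≤ (D (x :: l)).length := by
  match l with
  | [] => simp
  | a :: l' =>
    rw [length_D_cons_cons]
    omega

theorem length_D_cons_le_cons_cons (x y : X) (l : List X) :
    (D (x :: l)).length ≤ (D (x :: y :: l)).length := by
  match l with
  | [] =>
    rw [length_D_cons_cons]
    by_cases h : x = y <;> simp [h]
  | z :: l' =>
    rw [length_D_cons_cons, length_D_cons_cons, length_D_cons_cons]
    by_cases h1 : x = y <;> by_cases h2 : y = z <;> by_cases h3 : x = z <;>
      simp [h1, h2, h3] at * <;> omega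

theorem length_D_replicate_append (y : X) (d : List X) :
    ∀ i, 1 ≤ i → (D (List.replicate i y ++ d)).length = (D (y :: d)).length := by
  intro i hi
  induction i with
  | zero => omega
  | succ k ih =>
    match k with
    | 0 => simp
    | k + 1 =>
      have e : List.replicate (k + 2) y ++ d = y :: (List.replicate (k + 1) y ++ d) := rfl
      rw [e]
      have e2 : List.replicate (k + 1) y ++ d = y :: (List.replicate k y ++ d) := rfl
      rw [e2, length_D_cons_cons, if_pos rfl, zero_add, ← e2, ih (by omega)]

theorem D_cons_of_head_ne (x : X) (l : List X) (h : ∀ y ∈ l.head?, y ≠ x) :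
    D (x :: l) = x :: D l := by
  match l with
  | [] => rfl
  | a :: l' =>
    rw [D_cons_cons, if_neg]
    intro hc
    exact h a rfl hc.symm

theorem D_chain : ∀ l : List X, List.Chain' (· ≠ ·) (D l) := by
  intro l
  induction l with
  | nil => exact List.isChain_nil
  | cons x l ih =>
    match l with
    | [] => exact List.isChain_singleton x
    | y :: l' =>
      rw [D_cons_cons]
      by_cases h : x = y
      · rw [if_pos h]; exact ih
      · rw [if_neg h]
        apply List.isChain_cons.mpr
        refine ⟨?_, ih⟩
        intro b hb
        obtain ⟨t, ht⟩ := D_cons_head y l'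
        rw [ht] at hb
        simp only [List.head?_cons, Option.mem_def, Option.some.injEq] at hb
        subst hb
        exact h

theorem D_eq_self_of_chain : ∀ l : List X, List.Chain' (· ≠ ·) l → D l = l := by
  intro l
  induction l with
  | nil => intro; rfl
  | cons x l ih =>
    intro h
    match l with
    | [] => rfl
    | y :: l' =>
      replace h := List.isChain_cons_cons.mp h
      rw [D_cons_cons, if_neg h.1, ih h.2]

theorem D_idem (l : List X) : D (D l) = D l := D_eq_self_of_chain _ (D_chain l)

/-! ### The series attached to a reduced word -/

/-- A series is supported on powers of `x`. -/
def SuppPow (x : X) (h : NCSeries X) : Prop :=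
  ∀ l : List X, ¬(∀ a ∈ l, a = x) → h (FreeMonoid.ofList l) = 0

/-- The factor of the Magnus image attached to a single letter of a word. -/
noncomputable def fac (p : X × Bool) : NCSeries X :=
  cond p.2 (1 + Xvar p.1) (geom p.1)

/-- The Magnus image of a word. -/
noncomputable def FF (L : List (X × Bool)) : NCSeries X := (L.map fac).prod

@[simp] theorem FF_nil : FF ([] : List (X × Bool)) = 1 := rfl

theorem FF_cons (p : X × Bool) (L : List (X × Bool)) : FF (p :: L) = fac p * FF L := by
  unfold FF
  rw [List.map_cons, List.prod_cons]

theorem suppPow_fac (x : X) (b : Bool) : SuppPow x (fac (x, b)) := by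
  intro l hl
  cases b with
  | true =>
    show (1 + Xvar x) _ = 0
    rw [oneXvar_ofList, if_neg, if_neg]
    · simp
    · rintro rfl
      exact hl fun a ha => by simpa using ha
    · rintro rfl
      exact hl fun a ha => absurd ha (by simp)
  | false =>
    show geom x _ = 0
    rw [geom_ofList, if_neg hl]

theorem suppPow_mul (x : X) {f g : NCSeries X} (hf : SuppPow x f) (hg : SuppPow x g) :
    SuppPow x (f * g) := by
  intro l hl
  rw [mul_ofList]
  refine Finset.sum_eq_zero fun i _ => ?_
  by_cases ht : ∀ a ∈ l.take i, a = x
  · have hd : ¬(∀ a ∈ l.drop i, a = x) := by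
      intro hd
      refine hl fun a ha => ?_
      rw [← List.take_append_drop i l, List.mem_append] at ha
      rcases ha with ha | ha
      · exact ht a ha
      · exact hd a ha
    rw [hg _ hd, mul_zero]
  · rw [hf _ ht, zero_mul]

theorem fac_nil (p : X × Bool) : fac p (FreeMonoid.ofList []) = 1 := by
  cases p with
  | mk x b =>
    cases b with
    | true => rw [fac]; show (1 + Xvar x) _ = 1; rw [oneXvar_ofList]; simp
    | false => rw [fac]; show geom x _ = 1; rw [geom_ofList]; simp

theorem fac_single (x : X) (b : Bool) :
    fac (x, b) (FreeMonoid.ofList [x]) = cond b 1 (-1) := by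
  cases b with
  | true =>
    rw [fac]; show (1 + Xvar x) _ = 1; rw [oneXvar_ofList]; simp
  | false =>
    rw [fac]; show geom x _ = -1; rw [geom_ofList, if_pos (by simp)]; simp

/-- A word is reduced : adjacent letters with the same generator have the same sign. -/
def RedW (L : List (X × Bool)) : Prop :=
  List.Chain' (fun p q : X × Bool => p.1 = q.1 → p.2 = q.2) L

/-! ### The run-count bound -/

theorem lemA' : ∀ (L : List (X × Bool)) (m : List X) (x : X),
    FF L (FreeMonoid.ofList m) ≠ 0 →
    (D (x :: m)).length ≤ (D (x :: L.map Prod.fst)).length := by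
  intro L
  induction L with
  | nil =>
    intro m x hm
    rw [show FF [] = 1 from rfl, one_ofList] at hm
    have : m = [] := by
      by_contra hc
      rw [if_neg hc] at hm
      exact hm rfl
    subst this
    exact le_refl _
  | cons p L' ih =>
    obtain ⟨y, b⟩ := p
    intro m x hm
    rw [FF_cons, mul_ofList] at hm
    obtain ⟨i, hi, hterm⟩ := Finset.exists_ne_zero_of_sum_ne_zero hm
    rw [Finset.mem_range] at hi
    have htake : ∀ a ∈ m.take i, a = y := by
      by_contra hc
      rw [suppPow_fac y b _ hc, zero_mul] at hterm
      exact hterm rfl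
    have hFd : FF L' (FreeMonoid.ofList (m.drop i)) ≠ 0 := by
      intro hc
      rw [hc, mul_zero] at hterm
      exact hterm rfl
    have hrepl : m.take i = List.replicate i y := by
      refine List.eq_replicate_iff.mpr ⟨?_, htake⟩
      rw [List.length_take]
      omega
    have hm' : m = List.replicate i y ++ m.drop i := by
      conv_lhs => rw [← List.take_append_drop i m]
      rw [hrepl]
    rw [List.map_cons]
    dsimp only
    match i with
    | 0 =>
      simp only [List.drop_zero] at hFd
      calc (D (x :: m)).length ≤ (D (x :: L'.map Prod.fst)).length := ih m x hFd
        _ ≤ (D (x :: y :: L'.map Prod.fst)).length := length_D_cons_le_cons_cons x y _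
    | k + 1 =>
      rw [hm']
      have e : x :: (List.replicate (k + 1) y ++ m.drop (k + 1)) =
          x :: y :: (List.replicate k y ++ m.drop (k + 1)) := rfl
      rw [e, length_D_cons_cons, length_D_cons_cons]
      have e2 : y :: (List.replicate k y ++ m.drop (k + 1)) =
          List.replicate (k + 1) y ++ m.drop (k + 1) := rfl
      rw [e2, length_D_replicate_append y _ (k + 1) (by omega)]
      have := ih (m.drop (k + 1)) y hFd
      omega

theorem lemA (L : List (X × Bool)) (m : List X)
    (hm : FF L (FreeMonoid.ofList m) ≠ 0) :
    (D m).length ≤ (D (L.map Prod.fst)).length := by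
  match L with
  | [] =>
    rw [show FF [] = 1 from rfl, one_ofList] at hm
    have : m = [] := by
      by_contra hc
      rw [if_neg hc] at hm
      exact hm rfl
    subst this
    simp
  | (y, b) :: L' =>
    have h1 := lemA' ((y, b) :: L') m y hm
    rw [List.map_cons] at h1 ⊢
    rw [length_D_cons_cons, if_pos rfl, zero_add] at h1
    exact le_trans (length_D_le_cons y m) h1

/-! ### The key nonvanishing lemma -/

theorem fac_nil' (p : X × Bool) : fac p (FreeMonoid.ofList []) = 1 := fac_nil p

open Classical in
theorem lemQ : ∀ (L : List (X × Bool)), RedW L → ∀ (x : X) (b : Bool) (h : NCSeries X),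
    SuppPow x h → h (FreeMonoid.ofList []) = 1 →
    (if b then 0 < h (FreeMonoid.ofList [x]) else h (FreeMonoid.ofList [x]) < 0) →
    (∀ p ∈ L.head?, p.1 = x → p.2 = b) →
    (h * FF L) (FreeMonoid.ofList (D (x :: L.map Prod.fst))) ≠ 0 := by
  intro L
  induction L with
  | nil =>
    intro _ x b h _ _ hsign _
    rw [show FF [] = 1 from rfl, mul_one]
    simp only [List.map_nil, D_singleton]
    cases b with
    | true => rw [if_pos rfl] at hsign; omega
    | false => rw [if_neg (by simp)] at hsign; omega
  | cons p L' ih =>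
    obtain ⟨x', b'⟩ := p
    intro hred x b h hsupp hone hsign hhead
    have hredtail : RedW L' := (List.isChain_cons.mp hred).2
    have hheadrel : ∀ q ∈ L'.head?, (x', b').1 = q.1 → (x', b').2 = q.2 :=
      (List.isChain_cons.mp hred).1
    by_cases hxx : x' = x
    · subst hxx
      have hb : b' = b := hhead (x', b') rfl rfl
      subst hb
      rw [List.map_cons]
      dsimp only
      rw [FF_cons, ← mul_assoc]
      have e : D (x' :: x' :: L'.map Prod.fst) = D (x' :: L'.map Prod.fst) := by
        rw [D_cons_cons, if_pos rfl]
      rw [e]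
      have hone' : (h * fac (x', b')) (FreeMonoid.ofList []) = 1 := by
        rw [mul_ofList]
        simp only [List.length_nil, zero_add, Finset.sum_range_one, List.take_nil,
          List.drop_nil]
        rw [hone, fac_nil, one_mul]
      have hval : (h * fac (x', b')) (FreeMonoid.ofList [x']) =
          h (FreeMonoid.ofList [x']) + cond b' 1 (-1) := by
        rw [mul_ofList]
        rw [show ([x'] : List X).length + 1 = 2 from rfl]
        rw [Finset.sum_range_succ, Finset.sum_range_one]
        simp only [List.take_zero, List.drop_zero, List.take_succ_cons, List.take_nil,
          List.drop_succ_cons, List.drop_nil]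
        rw [hone, one_mul, fac_nil, mul_one, fac_single]
        ring
      refine ih hredtail x' b' (h * fac (x', b')) ?_ hone' ?_ ?_
      · exact suppPow_mul x' hsupp (suppPow_fac x' b')
      · cases b' with
        | true =>
          rw [if_pos rfl] at hsign ⊢
          rw [hval]
          simp only [cond_true]
          omega
        | false =>
          rw [if_neg (by simp)] at hsign ⊢
          rw [hval]
          simp only [cond_false]
          omega
      · intro q hq hq1
        exact (hheadrel q hq hq1.symm).symm
    · -- first letter of L differs from x
      rw [List.map_cons]
      dsimp only
      obtain ⟨t, ht⟩ := D_cons_head x' (L'.map Prod.fst)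
      have e : D (x :: x' :: L'.map Prod.fst) = x :: x' :: t := by
        rw [D_cons_cons, if_neg (fun hc => hxx hc.symm), ht]
      rw [e]
      have hsign' : h (FreeMonoid.ofList [x]) ≠ 0 := by
        cases b with
        | true => rw [if_pos rfl] at hsign; omega
        | false => rw [if_neg (by simp)] at hsign; omega
      rw [mul_ofList]
      rw [show (x :: x' :: t).length + 1 = t.length + 1 + 2 from by simp]
      rw [sum_range_two_extract _ _ ?_]
      · -- the two surviving terms
        simp only [List.take_zero, List.drop_zero, List.take_succ_cons, List.take_zero,
          List.drop_succ_cons, List.drop_zero]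
        rw [hone, one_mul]
        have hzero : FF ((x', b') :: L') (FreeMonoid.ofList (x :: x' :: t)) = 0 := by
          by_contra hc
          have h1 := lemA _ _ hc
          rw [List.map_cons] at h1
          dsimp only at h1
          have h2 : D (x :: x' :: t) = x :: D (x' :: t) := by
            rw [D_cons_cons, if_neg (fun hc' => hxx hc'.symm)]
          have h4 : D (x' :: t) = D (x' :: L'.map Prod.fst) := by
            rw [← ht, D_idem]
          rw [h2, List.length_cons, h4] at h1
          omega
        rw [hzero, zero_add]
        have hmain : FF ((x', b') :: L') (FreeMonoid.ofList (x' :: t)) ≠ 0 := by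
          rw [← ht, FF_cons]
          refine ih hredtail x' b' (fac (x', b')) (suppPow_fac x' b') (fac_nil _) ?_ ?_
          · rw [fac_single]
            cases b' with
            | true => rw [if_pos rfl]; simp
            | false => rw [if_neg (by simp)]; simp
          · intro q hq hq1
            exact (hheadrel q hq hq1.symm).symm
        exact mul_ne_zero hsign' hmain
      · -- the vanishing terms
        intro i h2i hilt
        obtain ⟨j, rfl⟩ : ∃ j, i = j + 2 := ⟨i - 2, by omega⟩
        have htk : (x :: x' :: t).take (j + 2) = x :: x' :: t.take j := rfl
        have hs : ¬(∀ a ∈ (x :: x' :: t).take (j + 2), a = x) := by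
          rw [htk]
          intro hc
          exact hxx (hc x' (by simp))
        rw [hsupp _ hs, zero_mul]

open Classical in
theorem FF_ne_zero_of_red (L : List (X × Bool)) (hred : RedW L) (hne : L ≠ []) :
    FF L (FreeMonoid.ofList (D (L.map Prod.fst))) ≠ 0 := by
  match L with
  | (x, b) :: L' =>
    rw [List.map_cons]
    dsimp only
    rw [FF_cons]
    refine lemQ L' (List.isChain_cons.mp hred).2 x b (fac (x, b)) (suppPow_fac x b)
      (fac_nil _) ?_ ?_
    · rw [fac_single]
      cases b with
      | true => rw [if_pos rfl]; simp
      | false => rw [if_neg (by simp)]; simp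
    · intro q hq hq1
      exact ((List.isChain_cons.mp hred).1 q hq hq1.symm).symm

open Classical in
theorem redW_of_no_split (L : List (X × Bool))
    (h : ∀ (L1 : List (X × Bool)) (x : X) (b : Bool) (L2 : List (X × Bool)),
      L ≠ L1 ++ (x, b) :: (x, !b) :: L2) : RedW L := by
  induction L with
  | nil => exact List.isChain_nil
  | cons p L' ih =>
    match L' with
    | [] => exact List.isChain_singleton p
    | q :: L'' =>
      rw [RedW]; apply List.isChain_cons_cons.mpr
      constructor
      · intro h1
        by_contra h2
        have hq : q = (p.1, !p.2) := by
          obtain ⟨q1, q2⟩ := q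
          obtain ⟨p1, p2⟩ := p
          simp only at h1 h2 ⊢
          subst h1
          cases p2 <;> cases q2 <;> simp_all
        refine h [] p.1 p.2 L'' ?_
        rw [hq]
        rfl
      · refine ih fun L1 x b L2 hc => ?_
        exact h (p :: L1) x b L2 (by rw [hc]; rfl)

end NCSeries

/-- The Magnus map `x ↦ 1 + X_x` from the free group on `X` into the group of units of
the ring of formal power series in non-commuting variables over `ℤ` is an injective
group homomorphism. -/
theorem magnus_map_injective (X : Type) :
    ∃ f : FreeGroup X →* (NCSeries X)ˣ,
      (∀ x : X, ((f (FreeGroup.of x) : (NCSeries X)ˣ) : NCSeries X) = 1 + NCSeries.Xvar x) ∧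
      Function.Injective f := by
  classical
  refine ⟨FreeGroup.lift fun x => NCSeries.magnusUnit x, fun x => ?_, ?_⟩
  · rw [FreeGroup.lift_apply_of]
    rfl
  · rw [injective_iff_map_eq_one]
    intro w hw
    by_contra hne
    set L := w.toWord with hLdef
    have hL : L ≠ [] := fun hnil => hne (FreeGroup.toWord_eq_nil_iff.mp hnil)
    have hred : NCSeries.RedW L := by
      refine NCSeries.redW_of_no_split L fun L1 x b L2 hc => ?_
      have hr : FreeGroup.reduce L = L := FreeGroup.reduce_toWord w
      rw [hc] at hr
      exact FreeGroup.reduce.not hr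
    have hcoe : ((FreeGroup.lift (fun x => NCSeries.magnusUnit x) w : (NCSeries X)ˣ) :
        NCSeries X) = NCSeries.FF L := by
      conv_lhs => rw [← FreeGroup.mk_toWord (x := w)]
      rw [FreeGroup.lift_mk, ← Units.coeHom_apply, map_list_prod, List.map_map]
      unfold NCSeries.FF
      congr 1
      refine List.map_congr_left fun p _ => ?_
      obtain ⟨x, b⟩ := p
      cases b with
      | true => rfl
      | false => rfl
    rw [hw] at hcoe
    have hne0 := NCSeries.FF_ne_zero_of_red L hred hL
    apply hne0
    rw [← hcoe]
    have hDne : NCSeries.D (L.map Prod.fst) ≠ [] := by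
      match L, hL with
      | (x, b) :: L', _ =>
        rw [List.map_cons]
        exact NCSeries.D_ne_nil _ _
    rw [Units.val_one, NCSeries.one_ofList, if_neg hDne]
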